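/- Let H be an o-ideal of a directed po-group G, let N = H ∩ G⁺, and let n ≥ 1. Then N^I = {(0, ⟨x_i : i ∈ I⟩) : x_i ∈ N for all i ∈ I} is a normal ideal of E = [0̄, u_n]. Moreover, the set N_f^I of all elements of N^I whose support {i ∈ I : x_i ≠ e} is finite is also a normal ideal of E, and if H ≠ {e} and I is nonempty then N_f^I is nontrivial (N_f^I ≠ {0̄}). -/

import Mathlib

open Function

variable {I G : Type*}

def kmul [Mul G] (φ : Equiv.Perm I) (p q : ℤ × (I → G)) : ℤ × (I → G) :=
  (p.1 + q.1, fun i => p.2 i * q.2 ((φ ^ p.1) i))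

def kone [One G] : ℤ × (I → G) := (0, fun _ => 1)

def kunit [One G] (n : ℤ) : ℤ × (I → G) := (n, fun _ => 1)

def kle [LE G] (p q : ℤ × (I → G)) : Prop :=
  p.1 < q.1 ∨ (p.1 = q.1 ∧ ∀ i, p.2 i ≤ q.2 i)

def kE [One G] [LE G] (n : ℤ) : Set (ℤ × (I → G)) :=
  {z | kle kone z ∧ kle z (kunit n)}

def kIsIdeal [Group G] [PartialOrder G] (φ : Equiv.Perm I) (n : ℤ)
    (J : Set (ℤ × (I → G))) : Prop :=
  J.Nonempty ∧ J ⊆ kE n ∧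
  (∀ a ∈ J, ∀ b ∈ J, kle (kmul φ a b) (kunit n) → kmul φ a b ∈ J) ∧
  (∀ a ∈ kE n, ∀ b ∈ J, kle a b → a ∈ J)

def kIsNormalIdeal [Group G] [PartialOrder G] (φ : Equiv.Perm I) (n : ℤ)
    (J : Set (ℤ × (I → G))) : Prop :=
  kIsIdeal φ n J ∧
  ∀ z ∈ kE n,
    {w | ∃ a ∈ J, kmul φ z a = w ∧ kle w (kunit n)} =
    {w | ∃ b ∈ J, kmul φ b z = w ∧ kle w (kunit n)}

/-- An o-ideal of a po-group `G`: a normal, convex and directed subgroup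
(common upper bounds of elements of `H` may be found inside `H`). -/
def IsOIdeal [Group G] [PartialOrder G] (H : Subgroup G) : Prop :=
  (∀ g ∈ H, ∀ x : G, x * g * x⁻¹ ∈ H) ∧
  (∀ a ∈ H, ∀ b ∈ H, ∀ g : G, a ≤ g → g ≤ b → g ∈ H) ∧
  (∀ a ∈ H, ∀ b ∈ H, ∃ c ∈ H, a ≤ c ∧ b ≤ c)

/-- `N^I = {(0, ⟨x_i⟩) : x_i ∈ N for all i}` where `N = H ∩ G⁺`. -/
def NI [Group G] [PartialOrder G] (H : Subgroup G) : Set (ℤ × (I → G)) :=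
  {p | p.1 = 0 ∧ ∀ i, p.2 i ∈ H ∧ 1 ≤ p.2 i}

/-- `N_f^I`: the elements of `N^I` with finite support. -/
def NfI [Group G] [PartialOrder G] (H : Subgroup G) : Set (ℤ × (I → G)) :=
  {p | p ∈ NI H ∧ {i : I | p.2 i ≠ 1}.Finite}

section Aux

variable [Group G] [PartialOrder G]
  [CovariantClass G G (· * ·) (· ≤ ·)] [CovariantClass G G (swap (· * ·)) (· ≤ ·)]

lemma one_le_conj_aux {a z : G} (h : 1 ≤ a) : 1 ≤ z * a * z⁻¹ := by
  have h1 : z * 1 ≤ z * a := mul_le_mul_right h z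
  have h2 : z * 1 * z⁻¹ ≤ z * a * z⁻¹ := mul_le_mul_left h1 z⁻¹
  simpa using h2

lemma NI_sub_kE {n : ℤ} (hn : 1 ≤ n) (H : Subgroup G) :
    NI (I := I) H ⊆ kE n := by
  rintro ⟨m, x⟩ ⟨hm, hx⟩
  dsimp only at hm
  subst hm
  exact ⟨Or.inr ⟨rfl, fun i => (hx i).2⟩, Or.inl (show (0 : ℤ) < n by omega)⟩

lemma kone_mem_NI (H : Subgroup G) : (kone : ℤ × (I → G)) ∈ NI H :=
  ⟨rfl, fun _ => ⟨one_mem H, le_refl 1⟩⟩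

lemma NI_mul (φ : Equiv.Perm I) (H : Subgroup G) {a b : ℤ × (I → G)}
    (ha : a ∈ NI H) (hb : b ∈ NI H) : kmul φ a b ∈ NI H := by
  refine ⟨by simp [kmul, ha.1, hb.1], fun i => ?_⟩
  exact ⟨mul_mem (ha.2 i).1 (hb.2 _).1, one_le_mul (ha.2 i).2 (hb.2 _).2⟩

lemma NI_down (H : Subgroup G) (hH : IsOIdeal H) {n : ℤ} {a b : ℤ × (I → G)}
    (haE : a ∈ kE n) (hb : b ∈ NI H) (hab : kle a b) : a ∈ NI H := by
  obtain ⟨h1, -⟩ := haE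
  have hb1 : b.1 = 0 := hb.1
  rcases hab with h | ⟨heq, hle⟩
  · exfalso
    rcases h1 with h' | ⟨h', -⟩
    · have : (0 : ℤ) < a.1 := h'
      omega
    · have : (0 : ℤ) = a.1 := h'
      omega
  · rcases h1 with h' | ⟨-, h'⟩
    · exfalso
      have : (0 : ℤ) < a.1 := h'
      omega
    · refine ⟨heq.trans hb1, fun i => ?_⟩
      have h1i : (1 : G) ≤ a.2 i := h' i
      exact ⟨hH.2.1 1 (one_mem H) (b.2 i) (hb.2 i).1 (a.2 i) h1i (hle i), h1i⟩

/-- Conjugation-stability (together with `J ⊆ NI H`) implies the normality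
set-equality for every `z ∈ E`. -/
lemma normal_eq (φ : Equiv.Perm I) (n : ℤ) (H : Subgroup G) {J : Set (ℤ × (I → G))}
    (hJsub : J ⊆ NI H)
    (hconj : ∀ p ∈ J, ∀ σ : Equiv.Perm I, ∀ z : I → G,
      ((0 : ℤ), fun i => z i * p.2 (σ i) * (z i)⁻¹) ∈ J) :
    ∀ z ∈ kE n,
      {w | ∃ a ∈ J, kmul φ z a = w ∧ kle w (kunit n)} =
      {w | ∃ b ∈ J, kmul φ b z = w ∧ kle w (kunit n)} := by
  intro z _
  ext w
  constructor
  · rintro ⟨a, haJ, rfl, hwle⟩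
    refine ⟨((0 : ℤ), fun i => z.2 i * a.2 ((φ ^ z.1) i) * (z.2 i)⁻¹),
      hconj a haJ (φ ^ z.1) z.2, ?_, hwle⟩
    have ha1 : a.1 = 0 := (hJsub haJ).1
    refine Prod.ext (by simp [kmul, ha1]) (funext fun i => ?_)
    show (fun i => z.2 i * a.2 ((φ ^ z.1) i) * (z.2 i)⁻¹) i *
        z.2 ((φ ^ (0 : ℤ)) i) = z.2 i * a.2 ((φ ^ z.1) i)
    simp only [zpow_zero, Equiv.Perm.coe_one, id_eq]
    exact inv_mul_cancel_right _ _
  · rintro ⟨b, hbJ, rfl, hwle⟩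
    refine ⟨((0 : ℤ), fun j => (z.2 (((φ ^ z.1)⁻¹) j))⁻¹ *
        b.2 (((φ ^ z.1)⁻¹) j) * ((z.2 (((φ ^ z.1)⁻¹) j))⁻¹)⁻¹),
      hconj b hbJ (φ ^ z.1)⁻¹ (fun j => (z.2 (((φ ^ z.1)⁻¹) j))⁻¹), ?_, hwle⟩
    have hb1 : b.1 = 0 := (hJsub hbJ).1
    refine Prod.ext (by simp [kmul, hb1]) (funext fun i => ?_)
    show z.2 i * ((fun j => (z.2 (((φ ^ z.1)⁻¹) j))⁻¹ *
        b.2 (((φ ^ z.1)⁻¹) j) * ((z.2 (((φ ^ z.1)⁻¹) j))⁻¹)⁻¹) ((φ ^ z.1) i)) =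
        b.2 i * z.2 ((φ ^ b.1) i)
    simp only [hb1, zpow_zero, Equiv.Perm.coe_one, id_eq, inv_inv,
      Equiv.Perm.inv_def, Equiv.symm_apply_apply]
    group

lemma NI_conj (H : Subgroup G) (hH : IsOIdeal H) :
    ∀ p ∈ NI (I := I) H, ∀ σ : Equiv.Perm I, ∀ z : I → G,
      ((0 : ℤ), fun i => z i * p.2 (σ i) * (z i)⁻¹) ∈ NI H := by
  intro p hp σ z
  exact ⟨rfl, fun i => ⟨hH.1 _ (hp.2 (σ i)).1 (z i),
    one_le_conj_aux (hp.2 (σ i)).2⟩⟩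

lemma NfI_conj (H : Subgroup G) (hH : IsOIdeal H) :
    ∀ p ∈ NfI (I := I) H, ∀ σ : Equiv.Perm I, ∀ z : I → G,
      ((0 : ℤ), fun i => z i * p.2 (σ i) * (z i)⁻¹) ∈ NfI H := by
  intro p hp σ z
  refine ⟨NI_conj H hH p hp.1 σ z, ?_⟩
  have : {i : I | ((0 : ℤ), fun i => z i * p.2 (σ i) * (z i)⁻¹).2 i ≠ 1} =
      σ ⁻¹' {i : I | p.2 i ≠ 1} := by
    ext i
    simp [conj_eq_one_iff]
  rw [this]
  exact Set.Finite.preimage (σ.injective.injOn) hp.2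

lemma kIsIdeal_of (φ : Equiv.Perm I) {n : ℤ} (hn : 1 ≤ n) (H : Subgroup G)
    (hH : IsOIdeal H) {J : Set (ℤ × (I → G))} (hJsub : J ⊆ NI H)
    (hone : (kone : ℤ × (I → G)) ∈ J)
    (hmul : ∀ a ∈ J, ∀ b ∈ J, kmul φ a b ∈ J)
    (hdown : ∀ a ∈ kE n, ∀ b ∈ J, kle a b → a ∈ J) :
    kIsIdeal φ n J :=
  ⟨⟨kone, hone⟩, fun _ h => NI_sub_kE hn H (hJsub h),
    fun a ha b hb _ => hmul a ha b hb, fun a haE b hb hab => hdown a haE b hb hab⟩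

end Aux

/-- for an o-ideal `H` of a directed po-group `G` and `N = H ∩ G⁺`,
`N^I` is a normal ideal of `E = [0̄, u_n]`; the set `N_f^I` of its finitely
supported elements is a normal ideal too, and it is nontrivial whenever
`H ≠ {e}` and `I` is nonempty. -/
theorem stmt11 [Group G] [PartialOrder G]
    [CovariantClass G G (· * ·) (· ≤ ·)] [CovariantClass G G (swap (· * ·)) (· ≤ ·)]
    (hdir : ∀ a b : G, ∃ c, a ≤ c ∧ b ≤ c)
    (φ : Equiv.Perm I) (n : ℤ) (hn : 1 ≤ n)
    (H : Subgroup G) (hH : IsOIdeal H) :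
    kIsNormalIdeal φ n (NI (I := I) H) ∧
    kIsNormalIdeal φ n (NfI (I := I) H) ∧
    (H ≠ ⊥ → Nonempty I → NfI (I := I) H ≠ ({kone} : Set (ℤ × (I → G)))) := by
  have hNfIsub : NfI (I := I) H ⊆ NI H := fun p hp => hp.1
  refine ⟨⟨kIsIdeal_of φ hn H hH (fun _ h => h) (kone_mem_NI H)
      (fun a ha b hb => NI_mul φ H ha hb)
      (fun a haE b hb hab => NI_down H hH haE hb hab),
      normal_eq φ n H (fun _ h => h) (NI_conj H hH)⟩, ?_, ?_⟩
  · -- NfI is a normal ideal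
    refine ⟨kIsIdeal_of φ hn H hH hNfIsub
      ⟨kone_mem_NI H, by simp [kone]⟩ ?_ ?_,
      normal_eq φ n H hNfIsub (NfI_conj H hH)⟩
    · -- product closure
      intro a ha b hb
      refine ⟨NI_mul φ H ha.1 hb.1, ?_⟩
      have hsub : {i : I | (kmul φ a b).2 i ≠ 1} ⊆
          {i : I | a.2 i ≠ 1} ∪ (φ ^ a.1) ⁻¹' {j : I | b.2 j ≠ 1} := by
        intro i hi
        by_contra hcon
        simp only [Set.mem_union, Set.mem_setOf_eq, Set.mem_preimage, not_or,
          not_not] at hcon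
        exact hi (by simp [kmul, hcon.1, hcon.2])
      exact Set.Finite.subset ((ha.2).union
        (Set.Finite.preimage ((φ ^ a.1).injective.injOn) hb.2)) hsub
    · -- downward closure
      intro a haE b hb hab
      have haNI : a ∈ NI H := NI_down H hH haE hb.1 hab
      refine ⟨haNI, ?_⟩
      have hle : ∀ i, a.2 i ≤ b.2 i := by
        rcases hab with h | ⟨-, hle⟩
        · exfalso
          have ha1 : a.1 = 0 := haNI.1
          have hb1 : b.1 = 0 := hb.1.1
          omega
        · exact hle
      refine Set.Finite.subset hb.2 fun i hi => ?_
      intro hbi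
      exact hi (le_antisymm (hbi ▸ hle i) (haNI.2 i).2)
  · -- nontriviality
    intro hbot ⟨i₀⟩
    classical
    obtain ⟨g, hgH, hg⟩ : ∃ g ∈ H, g ≠ 1 := by
      by_contra hcon
      push_neg at hcon
      exact hbot (by ext x; simp [Subgroup.mem_bot]; exact
        ⟨fun hx => hcon x hx, fun hx => hx ▸ one_mem H⟩)
    obtain ⟨c, hcH, hc1, hcg⟩ := hH.2.2 1 (one_mem H) g hgH
    obtain ⟨d, hdH, hd1, hdg⟩ := hH.2.2 1 (one_mem H) g⁻¹ (inv_mem hgH)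
    have hpos : ∃ h ∈ H, 1 ≤ h ∧ h ≠ 1 := by
      by_cases hc : c = 1
      · refine ⟨d, hdH, hd1, fun hd => ?_⟩
        subst hc; subst hd
        exact hg (le_antisymm hcg (by simpa using hdg))
      · exact ⟨c, hcH, hc1, hc⟩
    obtain ⟨h, hhH, hh1, hhne⟩ := hpos
    intro hEq
    have hp : ((0 : ℤ), fun i => if i = i₀ then h else 1) ∈ NfI (I := I) H := by
      refine ⟨⟨rfl, fun i => ?_⟩, ?_⟩
      · by_cases hi : i = i₀ <;> simp [hi, hhH, hh1, one_mem]
      · refine Set.Finite.subset (Set.finite_singleton i₀) fun i hi => ?_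
        by_contra hcon
        simp only [Set.mem_singleton_iff] at hcon
        exact hi (by simp [hcon])
    rw [hEq] at hp
    have := congrFun (congrArg Prod.snd hp) i₀
    simp [kone] at this
    exact hhne this
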